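/- arXiv:2406.08360 — 2 statements merged into one kernel-verified Lean document; each statement's English description precedes it below -/
import Mathlib

section
/- Necessary condition for conclusive k-state exclusion: Let {ρ_x}_{x=1}^N be density operators on ℂ^d, and suppose there exists a POVM {S_Y} indexed by the k-element subsets Y of {1,…,N} (i.e., S_Y ≥ 0 and ∑_Y S_Y = I) such that tr(S_Y ρ_y) = 0 for every Y and every y ∈ Y. Then ∑_{x=1}^N Π_x ≤ (N−k) I, where Π_x is the projection onto the support of ρ_x. -/
open Matrix ComplexOrder

/-- `P` is the orthogonal projection onto the support (range) of `σ`. -/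
def IsSupportProjection {d : ℕ} (σ P : Matrix (Fin d) (Fin d) ℂ) : Prop :=
  P.IsHermitian ∧ P * P = P ∧
    LinearMap.range P.mulVecLin = LinearMap.range σ.mulVecLin

private lemma aux1 {m : ℕ} {M : Matrix (Fin m) (Fin m) ℂ} (h : (Mᴴ * M).trace = 0) : M = 0 := by
  have h2 : ∑ j, ∑ i, Complex.normSq (M i j) = 0 := by
    have := congrArg Complex.re h
    simpa [Matrix.trace, Matrix.mul_apply, Matrix.conjTranspose_apply,
      Complex.normSq_eq_conj_mul_self, Complex.re_sum, Complex.normSq_apply] using this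
  ext i j
  have := (Finset.sum_eq_zero_iff_of_nonneg
    (fun j _ => Finset.sum_nonneg fun i _ => Complex.normSq_nonneg _)).1 h2 j (Finset.mem_univ j)
  have := (Finset.sum_eq_zero_iff_of_nonneg
    (fun i _ => Complex.normSq_nonneg _)).1 this i (Finset.mem_univ i)
  simpa using Complex.normSq_eq_zero.1 this

private lemma aux2 {m : ℕ} {A B : Matrix (Fin m) (Fin m) ℂ} (hA : A.PosSemidef)
    (hB : B.PosSemidef) (h : (A * B).trace = 0) : A * B = 0 := by
  obtain ⟨C, rfl⟩ : ∃ C : Matrix (Fin m) (Fin m) ℂ, A = Cᴴ * C := by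
    open scoped MatrixOrder in exact CStarAlgebra.nonneg_iff_eq_star_mul_self.mp hA.nonneg
  obtain ⟨D, rfl⟩ : ∃ D : Matrix (Fin m) (Fin m) ℂ, B = Dᴴ * D := by
    open scoped MatrixOrder in exact CStarAlgebra.nonneg_iff_eq_star_mul_self.mp hB.nonneg
  have key : C * Dᴴ = 0 := by
    apply aux1
    have e : (C * Dᴴ)ᴴ * (C * Dᴴ) = D * (Cᴴ * C * Dᴴ) := by
      simp [conjTranspose_mul, Matrix.mul_assoc]
    rw [e, trace_mul_comm, Matrix.mul_assoc]
    exact h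
  calc Cᴴ * C * (Dᴴ * D) = Cᴴ * (C * Dᴴ) * D := by simp [Matrix.mul_assoc]
    _ = 0 := by rw [key]; simp

private lemma aux3 {m : ℕ} {ρ P M : Matrix (Fin m) (Fin m) ℂ} (hρ : ρ.PosSemidef)
    (hP : IsSupportProjection ρ P) (h : ρ * M = 0) : P * M = 0 := by
  obtain ⟨hherm, hidem, hrange⟩ := hP
  have key0 : ∀ u : Fin m → ℂ, ρ *ᵥ u = 0 → P *ᵥ u = 0 := by
    intro u hρu
    have hmem : P *ᵥ u ∈ LinearMap.range ρ.mulVecLin := by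
      rw [← hrange]; exact ⟨u, rfl⟩
    obtain ⟨z, hz⟩ := hmem
    rw [mulVecLin_apply] at hz
    have hdp : star (P *ᵥ u) ⬝ᵥ (P *ᵥ u) = 0 := by
      calc star (P *ᵥ u) ⬝ᵥ (P *ᵥ u)
          = (star u ᵥ* Pᴴ) ⬝ᵥ (P *ᵥ u) := by rw [star_mulVec]
        _ = ((star u ᵥ* Pᴴ) ᵥ* P) ⬝ᵥ u := by rw [dotProduct_mulVec]
        _ = (star u ᵥ* (Pᴴ * P)) ⬝ᵥ u := by rw [vecMul_vecMul]
        _ = (star u ᵥ* P) ⬝ᵥ u := by rw [hherm.eq, hidem]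
        _ = star u ⬝ᵥ (P *ᵥ u) := (dotProduct_mulVec _ _ _).symm
        _ = star u ⬝ᵥ (ρ *ᵥ z) := by rw [hz]
        _ = (star u ᵥ* ρ) ⬝ᵥ z := by rw [dotProduct_mulVec]
        _ = (star u ᵥ* ρᴴ) ⬝ᵥ z := by rw [hρ.1.eq]
        _ = star (ρ *ᵥ u) ⬝ᵥ z := by rw [star_mulVec]
        _ = 0 := by rw [hρu]; simp
    exact dotProduct_star_self_eq_zero.1 hdp
  have key : ∀ w : Fin m → ℂ, P *ᵥ (M *ᵥ w) = 0 := fun w =>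
    key0 _ (by rw [mulVec_mulVec, h, zero_mulVec])
  ext i j
  have h1 := key (Pi.single j 1)
  rw [mulVec_mulVec] at h1
  simpa [mulVec_single] using congrFun h1 i

private lemma psd_sum {m : ℕ} {ι : Type*} (s : Finset ι) (f : ι → Matrix (Fin m) (Fin m) ℂ)
    (h : ∀ i ∈ s, (f i).PosSemidef) : (∑ i ∈ s, f i).PosSemidef := by
  classical
  induction s using Finset.induction_on with
  | empty => simpa using Matrix.PosSemidef.zero
  | insert _ _ hx ih =>
    rw [Finset.sum_insert hx]
    exact ((h _ (Finset.mem_insert_self _ _)).add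
      (ih fun i hi => h i (Finset.mem_insert_of_mem hi)))

/-- Necessary condition for conclusive `k`-state exclusion:
if a POVM `{S_Y}` indexed by the `k`-element subsets of `{1,…,N}` satisfies
`tr(S_Y ρ_y) = 0` for all `Y` and `y ∈ Y`, then `∑ₓ Πₓ ≤ (N−k)·I`. -/
theorem k_state_exclusion_necessary {d N k : ℕ}
    (hk : 1 ≤ k) (hkN : k < N)
    (ρ : Fin N → Matrix (Fin d) (Fin d) ℂ)
    (hρ : ∀ x, (ρ x).PosSemidef ∧ (ρ x).trace = 1)
    (P : Fin N → Matrix (Fin d) (Fin d) ℂ)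
    (hP : ∀ x, IsSupportProjection (ρ x) (P x))
    (S : Finset (Fin N) → Matrix (Fin d) (Fin d) ℂ)
    (hSpos : ∀ Y : Finset (Fin N), Y.card = k → (S Y).PosSemidef)
    (hSsum : ∑ Y ∈ Finset.univ.filter (fun Y : Finset (Fin N) => Y.card = k), S Y = 1)
    (hexcl : ∀ Y : Finset (Fin N), Y.card = k → ∀ y ∈ Y, (S Y * ρ y).trace = 0) :
    ((((N - k : ℕ) : ℂ) • (1 : Matrix (Fin d) (Fin d) ℂ)) - ∑ x, P x).PosSemidef := by
  classical
  set 𝒴 : Finset (Finset (Fin N)) := Finset.univ.filter (fun Y => Y.card = k) with h𝒴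
  have hmem𝒴 : ∀ Y, Y ∈ 𝒴 ↔ Y.card = k := by
    intro Y; simp [h𝒴]
  set A : Fin N → Matrix (Fin d) (Fin d) ℂ :=
    fun x => ∑ Y ∈ 𝒴.filter (fun Y => x ∈ Y), S Y with hA
  -- P x kills S Y whenever x ∈ Y
  have hPS : ∀ Y ∈ 𝒴, ∀ x ∈ Y, P x * S Y = 0 := by
    intro Y hY x hx
    have hYk := (hmem𝒴 Y).1 hY
    have h1 : S Y * ρ x = 0 := aux2 (hSpos Y hYk) (hρ x).1 (hexcl Y hYk x hx)
    have h2 : ρ x * S Y = 0 := by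
      have := congrArg conjTranspose h1
      simpa [conjTranspose_mul, (hρ x).1.1.eq, (hSpos Y hYk).1.eq] using this
    exact aux3 (hρ x).1 (hP x) h2
  have hApos : ∀ x, (A x).PosSemidef := by
    intro x
    exact psd_sum _ _ fun Y hY =>
      hSpos Y ((hmem𝒴 Y).1 (Finset.mem_of_mem_filter Y hY))
  have hPA : ∀ x, P x * A x = 0 := by
    intro x
    rw [hA]
    simp only [Finset.mul_sum]
    apply Finset.sum_eq_zero
    intro Y hY
    rw [Finset.mem_filter] at hY
    exact hPS Y hY.1 x hY.2
  have hAP : ∀ x, A x * P x = 0 := by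
    intro x
    have := congrArg conjTranspose (hPA x)
    simpa [conjTranspose_mul, (hApos x).1.eq, (hP x).1.eq] using this
  have hIA : ∀ x, ((1 : Matrix (Fin d) (Fin d) ℂ) - A x).PosSemidef := by
    intro x
    have hsplit := Finset.sum_filter_add_sum_filter_not 𝒴 (fun Y => x ∈ Y) S
    have : (1 : Matrix (Fin d) (Fin d) ℂ) - A x
        = ∑ Y ∈ 𝒴.filter (fun Y => ¬ x ∈ Y), S Y := by
      have hAx : A x = ∑ Y ∈ 𝒴.filter (fun Y => x ∈ Y), S Y := rfl
      rw [hAx, ← hSsum, ← hsplit]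
      abel
    rw [this]
    exact psd_sum _ _ fun Y hY =>
      hSpos Y ((hmem𝒴 Y).1 (Finset.mem_of_mem_filter Y hY))
  -- key pointwise PSD fact
  have key : ∀ x, ((1 - P x) - A x).PosSemidef := by
    intro x
    have hconj := (hIA x).mul_mul_conjTranspose_same (1 - P x)
    have hct : ((1 : Matrix (Fin d) (Fin d) ℂ) - P x)ᴴ = 1 - P x := by
      simp [(hP x).1.eq]
    rw [hct] at hconj
    have expand : (1 - P x) * (1 - A x) * (1 - P x) = (1 - P x) - A x := by
      have h3 := (hP x).2.1
      simp only [Matrix.sub_mul, Matrix.mul_sub, Matrix.mul_one, Matrix.one_mul,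
        hPA x, hAP x, h3, sub_zero]
      abel
    rwa [expand] at hconj
  -- sum of A x equals k • 1
  have hsumA : ∑ x, A x = (k : ℕ) • (1 : Matrix (Fin d) (Fin d) ℂ) := by
    have hAx : ∀ x, A x = ∑ Y ∈ 𝒴.filter (fun Y => x ∈ Y), S Y := fun _ => rfl
    simp only [hAx, Finset.sum_filter]
    rw [Finset.sum_comm]
    have : ∀ Y ∈ 𝒴, (∑ x : Fin N, if x ∈ Y then S Y else 0) = (k : ℕ) • S Y := by
      intro Y hY
      rw [Finset.sum_ite_mem, Finset.univ_inter, Finset.sum_const, (hmem𝒴 Y).1 hY]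
    rw [Finset.sum_congr rfl this, ← Finset.smul_sum, hSsum]
  have hsum : ∑ x, ((1 - P x) - A x)
      = (((N - k : ℕ) : ℂ) • (1 : Matrix (Fin d) (Fin d) ℂ)) - ∑ x, P x := by
    rw [Finset.sum_sub_distrib, Finset.sum_sub_distrib, hsumA, Finset.sum_const,
      Finset.card_univ, Fintype.card_fin]
    have hc : ((N - k : ℕ) : ℂ) = (N : ℂ) - (k : ℂ) := by
      rw [Nat.cast_sub hkN.le]
    rw [hc, sub_smul, ← Nat.cast_smul_eq_nsmul ℂ N, ← Nat.cast_smul_eq_nsmul ℂ k]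
    abel
  rw [← hsum]
  exact psd_sum _ _ fun x _ => key x
end

section
/- Unital channels are rank non-decreasing: if ℰ is a unital quantum channel on d×d matrices (ℰ(I) = I, CPTP) and ρ is a density operator, then rank(ℰ(ρ)) ≥ rank(ρ). -/
open Matrix ComplexOrder

/-- The normalized maximally entangled vector `|Φ⁺⟩ = (1/√d)∑ᵢ|i⟩⊗|i⟩`. -/
noncomputable def maxEnt (d : ℕ) : Fin d × Fin d → ℂ :=
  fun p => if p.1 = p.2 then (1 / Real.sqrt d : ℝ) else 0

/-- The density matrix `|Φ⁺⟩⟨Φ⁺|`. -/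
noncomputable def maxEntProj (d : ℕ) : Matrix (Fin d × Fin d) (Fin d × Fin d) ℂ :=
  vecMulVec (maxEnt d) (star (maxEnt d))

/-- `(𝒩 ⊗ id)(M)` for a linear map `𝒩` on `d×d` matrices. -/
noncomputable def tensorId {d : ℕ}
    (𝒩 : Matrix (Fin d) (Fin d) ℂ →ₗ[ℂ] Matrix (Fin d) (Fin d) ℂ)
    (M : Matrix (Fin d × Fin d) (Fin d × Fin d) ℂ) :
    Matrix (Fin d × Fin d) (Fin d × Fin d) ℂ :=
  fun p q => ∑ c : Fin d, ∑ c' : Fin d,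
    (𝒩 (Matrix.single c c' 1)) p.1 q.1 * M (c, p.2) (c', q.2)

namespace Matrix.PosSemidef

open scoped MatrixOrder

variable {n : Type*} [Fintype n] [DecidableEq n] {M : Matrix n n ℂ}

noncomputable def sqrt (_hM : M.PosSemidef) : Matrix n n ℂ := CFC.sqrt M

lemma posSemidef_sqrt (hM : M.PosSemidef) : hM.sqrt.PosSemidef :=
  Matrix.nonneg_iff_posSemidef.mp (CFC.sqrt_nonneg M)

lemma sqrt_mul_self (hM : M.PosSemidef) : hM.sqrt * hM.sqrt = M :=
  CFC.sqrt_mul_sqrt_self M (Matrix.nonneg_iff_posSemidef.mpr hM)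

end Matrix.PosSemidef

namespace Matrix

lemma posSemidef_iff_eq_transpose_mul_self {n : Type*} [Fintype n] [DecidableEq n]
    {A : Matrix n n ℂ} : A.PosSemidef ↔ ∃ B : Matrix n n ℂ, A = Bᴴ * B := by
  constructor
  · intro hA
    refine ⟨hA.sqrt, ?_⟩
    rw [hA.posSemidef_sqrt.isHermitian.eq, hA.sqrt_mul_self]
  · rintro ⟨B, rfl⟩
    exact Matrix.posSemidef_conjTranspose_mul_self B

end Matrix

namespace RankAux

variable {d : ℕ}

lemma choi_entry (hd : 0 < d)
    (ℰ : Matrix (Fin d) (Fin d) ℂ →ₗ[ℂ] Matrix (Fin d) (Fin d) ℂ)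
    (a b p q : Fin d) :
    tensorId ℰ (maxEntProj d) (p, a) (q, b)
      = ((d : ℂ))⁻¹ * (ℰ (Matrix.single a b 1)) p q := by
  have hsq : ((1 / Real.sqrt d : ℝ) : ℂ) * ((1 / Real.sqrt d : ℝ) : ℂ) = ((d : ℂ))⁻¹ := by
    rw [← Complex.ofReal_mul]
    have h0 : (1 / Real.sqrt d) * (1 / Real.sqrt d) = (d : ℝ)⁻¹ := by
      rw [div_mul_div_comm, one_mul, Real.mul_self_sqrt (by positivity), one_div]
    rw [h0, Complex.ofReal_inv, Complex.ofReal_natCast]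
  simp only [tensorId, maxEntProj, maxEntProj, vecMulVec_apply, maxEnt, Pi.star_apply]
  simp only [apply_ite (star : ℂ → ℂ), star_zero, mul_ite, ite_mul, zero_mul, mul_zero]
  rw [Finset.sum_eq_single a]
  · rw [Finset.sum_eq_single b]
    · simp only [if_true, RCLike.star_def, Complex.conj_ofReal]
      rw [hsq, mul_comm]
    · intro c' _ hc'; simp [hc']
    · intro h; simp at h
  · intro c _ hc
    rw [Finset.sum_eq_zero]
    intro c' _
    simp [hc]
  · intro h; simp at h

lemma E_apply (ℰ : Matrix (Fin d) (Fin d) ℂ →ₗ[ℂ] Matrix (Fin d) (Fin d) ℂ)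
    (M : Matrix (Fin d) (Fin d) ℂ) (p q : Fin d) :
    (ℰ M) p q = ∑ a, ∑ b, M a b * (ℰ (Matrix.single a b 1)) p q := by
  conv_lhs => rw [Matrix.matrix_eq_sum_single M]
  rw [map_sum]
  rw [Matrix.sum_apply]
  refine Finset.sum_congr rfl fun a _ => ?_
  rw [map_sum, Matrix.sum_apply]
  refine Finset.sum_congr rfl fun b _ => ?_
  rw [show Matrix.single a b (M a b) = M a b • Matrix.single a b 1 by
    rw [Matrix.smul_single, smul_eq_mul, mul_one]]
  rw [_root_.map_smul, Matrix.smul_apply, smul_eq_mul]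

lemma E_swap (hd : 0 < d)
    (ℰ : Matrix (Fin d) (Fin d) ℂ →ₗ[ℂ] Matrix (Fin d) (Fin d) ℂ)
    (hCP : (tensorId ℰ (maxEntProj d)).PosSemidef)
    (a b p q : Fin d) :
    (starRingEnd ℂ) ((ℰ (Matrix.single a b 1)) q p)
      = (ℰ (Matrix.single b a 1)) p q := by
  have hC := hCP.isHermitian
  have h1 := choi_entry hd ℰ a b q p
  have h2 := choi_entry hd ℰ b a p q
  have hherm : (starRingEnd ℂ) (tensorId ℰ (maxEntProj d) (q, a) (p, b))
      = tensorId ℰ (maxEntProj d) (p, b) (q, a) := by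
    conv_rhs => rw [← hC.eq]
    simp [Matrix.conjTranspose_apply]
  have hd' : ((d : ℂ))⁻¹ ≠ 0 := by
    simp [Nat.cast_ne_zero]; omega
  have := congrArg (starRingEnd ℂ) h1
  rw [_root_.map_mul] at this
  rw [hherm, h2] at this
  have hinv : (starRingEnd ℂ) ((d : ℂ))⁻¹ = ((d : ℂ))⁻¹ := by
    simp
  rw [hinv] at this
  exact mul_left_cancel₀ hd' this.symm

end RankAux
namespace RankAux

variable {d : ℕ}

lemma dot_eq_trace (M : Matrix (Fin d) (Fin d) ℂ) (x : Fin d → ℂ) :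
    star x ⬝ᵥ (M *ᵥ x) = (M * vecMulVec x (star x)).trace := by
  simp only [dotProduct, mulVec, Matrix.trace, Matrix.diag_apply, Matrix.mul_apply,
    vecMulVec_apply, Pi.star_apply, dotProduct]
  simp only [Finset.mul_sum, Finset.sum_mul]
  refine Finset.sum_congr rfl fun a _ => Finset.sum_congr rfl fun b _ => ?_
  ring

lemma rankone_quad (hd : 0 < d)
    (ℰ : Matrix (Fin d) (Fin d) ℂ →ₗ[ℂ] Matrix (Fin d) (Fin d) ℂ)
    (x y : Fin d → ℂ) :
    star y ⬝ᵥ ((ℰ (vecMulVec x (star x))) *ᵥ y)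
      = (d : ℂ) * (star (fun u : Fin d × Fin d => y u.1 * (starRingEnd ℂ) (x u.2)) ⬝ᵥ
          ((tensorId ℰ (maxEntProj d)) *ᵥ
            (fun u : Fin d × Fin d => y u.1 * (starRingEnd ℂ) (x u.2)))) := by
  have hd' : (d : ℂ) ≠ 0 := by simp [Nat.cast_ne_zero]; omega
  have hE : ∀ a b p q, (ℰ (Matrix.single a b 1)) p q
      = (d : ℂ) * tensorId ℰ (maxEntProj d) (p, a) (q, b) := by
    intro a b p q
    rw [choi_entry hd ℰ a b p q, ← mul_assoc, mul_inv_cancel₀ hd', one_mul]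
  simp only [dotProduct, mulVec, dotProduct, Fintype.sum_prod_type, Pi.star_apply,
    RCLike.star_def, _root_.map_mul, RingHomCompTriple.comp_apply, Complex.conj_conj, RingHom.id_apply]
  simp only [E_apply ℰ (vecMulVec x (star x)), vecMulVec_apply, Pi.star_apply, hE,
    RCLike.star_def]
  simp only [Finset.mul_sum, Finset.sum_mul]
  refine Finset.sum_congr rfl fun p _ => ?_
  rw [Finset.sum_comm]
  refine Finset.sum_congr rfl fun a _ => Finset.sum_congr rfl fun q _ =>
    Finset.sum_congr rfl fun b _ => ?_
  ring

lemma rankone_psd (hd : 0 < d)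
    (ℰ : Matrix (Fin d) (Fin d) ℂ →ₗ[ℂ] Matrix (Fin d) (Fin d) ℂ)
    (hCP : (tensorId ℰ (maxEntProj d)).PosSemidef)
    (x : Fin d → ℂ) : (ℰ (vecMulVec x (star x))).PosSemidef := by
  apply Matrix.PosSemidef.of_dotProduct_mulVec_nonneg
  · show _ = _
    ext p q
    rw [Matrix.conjTranspose_apply, E_apply, E_apply]
    simp only [map_sum, _root_.map_mul, E_swap hd ℰ hCP, vecMulVec_apply, Pi.star_apply,
      RCLike.star_def, RingHomCompTriple.comp_apply, Complex.conj_conj, RingHom.id_apply]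
    rw [Finset.sum_comm]
    refine Finset.sum_congr rfl fun a _ => Finset.sum_congr rfl fun b _ => ?_
    ring
  · intro y
    rw [rankone_quad hd ℰ x y]
    have h0 : (0:ℂ) ≤ (d : ℂ) := by
      have := Complex.zero_le_real.mpr (Nat.cast_nonneg (α := ℝ) d)
      simpa using this
    exact mul_nonneg h0 (hCP.dotProduct_mulVec_nonneg _)

lemma E_psd (hd : 0 < d)
    (ℰ : Matrix (Fin d) (Fin d) ℂ →ₗ[ℂ] Matrix (Fin d) (Fin d) ℂ)
    (hCP : (tensorId ℰ (maxEntProj d)).PosSemidef)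
    {M : Matrix (Fin d) (Fin d) ℂ} (hM : M.PosSemidef) : (ℰ M).PosSemidef := by
  have hs := hM.posSemidef_sqrt.isHermitian
  have hdecomp : M = ∑ i, vecMulVec (fun a => hM.sqrt a i) (star fun a => hM.sqrt a i) := by
    ext a b
    rw [Matrix.sum_apply]
    simp only [vecMulVec_apply, Pi.star_apply]
    have h1 : M a b = (hM.sqrt * hM.sqrt) a b := by rw [hM.sqrt_mul_self]
    rw [h1, Matrix.mul_apply]
    refine Finset.sum_congr rfl fun i _ => ?_
    have h2 := congr_fun (congr_fun hs.eq i) b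
    rw [Matrix.conjTranspose_apply] at h2
    rw [← h2]
  rw [hdecomp, map_sum]
  exact Finset.sum_induction _ _ (fun a b ha hb => ha.add hb) Matrix.PosSemidef.zero
    (fun i _ => rankone_psd hd ℰ hCP _)

end RankAux

namespace RankAux

variable {d : ℕ}

lemma trace_ctc_nonneg (C : Matrix (Fin d) (Fin d) ℂ) : 0 ≤ (Cᴴ * C).trace := by
  rw [Matrix.trace]
  apply Finset.sum_nonneg
  intro j _
  simp only [Matrix.diag_apply, Matrix.mul_apply, Matrix.conjTranspose_apply]
  exact Finset.sum_nonneg fun i _ => star_mul_self_nonneg _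

lemma eq_zero_of_trace_ctc (C : Matrix (Fin d) (Fin d) ℂ) (h : (Cᴴ * C).trace = 0) :
    C = 0 := by
  have h' : ∑ j, ∑ i, star (C i j) * C i j = 0 := by
    simpa [Matrix.trace, Matrix.mul_apply, Matrix.conjTranspose_apply] using h
  have hz := (Finset.sum_eq_zero_iff_of_nonneg (fun j (_ : j ∈ Finset.univ) =>
    Finset.sum_nonneg fun i (_ : i ∈ Finset.univ) => star_mul_self_nonneg (C i j))).mp h'
  ext i j
  have h2 := (Finset.sum_eq_zero_iff_of_nonneg
    (fun i (_ : i ∈ Finset.univ) => star_mul_self_nonneg (C i j))).mp (hz j (by simp)) i (by simp)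
  rcases mul_eq_zero.mp h2 with h0 | h0
  · simpa using star_eq_zero.mp h0
  · simpa using h0

lemma psd_trace_mul_nonneg {A B : Matrix (Fin d) (Fin d) ℂ}
    (hA : A.PosSemidef) (hB : B.PosSemidef) : 0 ≤ (A * B).trace := by
  obtain ⟨X, rfl⟩ := Matrix.posSemidef_iff_eq_transpose_mul_self.mp hA
  obtain ⟨Y, rfl⟩ := Matrix.posSemidef_iff_eq_transpose_mul_self.mp hB
  have e1 : (Y * Xᴴ)ᴴ * (Y * Xᴴ) = X * (Yᴴ * Y) * Xᴴ := by
    rw [Matrix.conjTranspose_mul, Matrix.conjTranspose_conjTranspose]; noncomm_ring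
  have e2 : (Xᴴ * X * (Yᴴ * Y)).trace = ((Y * Xᴴ)ᴴ * (Y * Xᴴ)).trace := by
    rw [e1, ← Matrix.trace_mul_cycle]
  rw [e2]
  exact trace_ctc_nonneg _

lemma psd_mul_eq_zero_of_trace {A B : Matrix (Fin d) (Fin d) ℂ}
    (hA : A.PosSemidef) (hB : B.PosSemidef) (h : (A * B).trace = 0) : A * B = 0 := by
  obtain ⟨Y, hY⟩ := Matrix.posSemidef_iff_eq_transpose_mul_self.mp hB
  set S := hA.sqrt with hS
  have hSS : S * S = A := hA.sqrt_mul_self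
  have hSH : S.IsHermitian := hA.posSemidef_sqrt.isHermitian
  have key : Y * S = 0 := by
    apply eq_zero_of_trace_ctc
    have e1 : (Y * S)ᴴ * (Y * S) = S * (Yᴴ * Y) * S := by
      rw [Matrix.conjTranspose_mul, hSH.eq]; noncomm_ring
    rw [e1, Matrix.trace_mul_cycle, ← Matrix.mul_assoc, hSS, Matrix.mul_assoc, ← hY, h]
  have key2 : S * Yᴴ = 0 := by
    have := congrArg Matrix.conjTranspose key
    simpa [Matrix.conjTranspose_mul, hSH.eq] using this
  calc A * B = S * (S * Yᴴ) * Y := by rw [hY, ← hSS]; noncomm_ring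
  _ = 0 := by rw [key2]; simp

end RankAux

namespace RankAux

variable {d : ℕ}

noncomputable def adjChan (ℰ : Matrix (Fin d) (Fin d) ℂ →ₗ[ℂ] Matrix (Fin d) (Fin d) ℂ)
    (Q : Matrix (Fin d) (Fin d) ℂ) : Matrix (Fin d) (Fin d) ℂ :=
  Matrix.of fun a b => ∑ p, ∑ q, Q p q * (ℰ (Matrix.single b a 1)) q p

lemma one_eq_sum : (1 : Matrix (Fin d) (Fin d) ℂ) = ∑ a, Matrix.single a a 1 := by
  ext i j
  rw [Matrix.sum_apply]
  by_cases h : i = j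
  · subst h
    rw [Matrix.one_apply_eq, Finset.sum_eq_single i]
    · simp [Matrix.single]
    · intro b _ hb; simp [Matrix.single, hb]
    · simp
  · rw [Matrix.one_apply_ne h, Finset.sum_eq_zero]
    intro a _
    simp only [Matrix.single, Matrix.of_apply]
    rw [if_neg]
    rintro ⟨rfl, rfl⟩; exact h rfl

lemma dual_trace (ℰ : Matrix (Fin d) (Fin d) ℂ →ₗ[ℂ] Matrix (Fin d) (Fin d) ℂ)
    (Q X : Matrix (Fin d) (Fin d) ℂ) :
    (adjChan ℰ Q * X).trace = (Q * ℰ X).trace := by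
  simp only [Matrix.trace, Matrix.diag_apply, Matrix.mul_apply, adjChan, Matrix.of_apply]
  simp only [E_apply ℰ X]
  simp only [Finset.sum_mul, Finset.mul_sum]
  simp only [← Fintype.sum_prod_type']
  refine Fintype.sum_equiv
    ⟨fun x : Fin d × Fin d × Fin d × Fin d => (x.2.2.1, x.2.2.2, x.2.1, x.1),
     fun y => (y.2.2.2, y.2.2.1, y.1, y.2.1), fun x => rfl, fun y => rfl⟩ _ _ fun x => ?_
  simp only [Equiv.coe_fn_mk]
  ring

lemma adj_herm (hd : 0 < d)
    (ℰ : Matrix (Fin d) (Fin d) ℂ →ₗ[ℂ] Matrix (Fin d) (Fin d) ℂ)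
    (hCP : (tensorId ℰ (maxEntProj d)).PosSemidef)
    {Q : Matrix (Fin d) (Fin d) ℂ} (hQ : Q.IsHermitian) :
    (adjChan ℰ Q).IsHermitian := by
  show _ = _
  ext a b
  rw [Matrix.conjTranspose_apply]
  simp only [adjChan, Matrix.of_apply, RCLike.star_def, map_sum, _root_.map_mul,
    E_swap hd ℰ hCP]
  rw [Finset.sum_comm]
  refine Finset.sum_congr rfl fun p _ => Finset.sum_congr rfl fun q _ => ?_
  have h1 := congr_fun (congr_fun hQ.eq p) q
  rw [Matrix.conjTranspose_apply, RCLike.star_def] at h1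
  rw [h1]

lemma adj_psd (hd : 0 < d)
    (ℰ : Matrix (Fin d) (Fin d) ℂ →ₗ[ℂ] Matrix (Fin d) (Fin d) ℂ)
    (hCP : (tensorId ℰ (maxEntProj d)).PosSemidef)
    {Q : Matrix (Fin d) (Fin d) ℂ} (hQ : Q.PosSemidef) :
    (adjChan ℰ Q).PosSemidef := by
  refine Matrix.PosSemidef.of_dotProduct_mulVec_nonneg (adj_herm hd ℰ hCP hQ.isHermitian) fun x => ?_
  rw [dot_eq_trace, dual_trace]
  exact psd_trace_mul_nonneg hQ (rankone_psd hd ℰ hCP x)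

lemma adj_one
    (ℰ : Matrix (Fin d) (Fin d) ℂ →ₗ[ℂ] Matrix (Fin d) (Fin d) ℂ)
    (hTP : ∀ ρ : Matrix (Fin d) (Fin d) ℂ, (ℰ ρ).trace = ρ.trace) :
    adjChan ℰ (1 : Matrix (Fin d) (Fin d) ℂ) = 1 := by
  ext a b
  simp only [adjChan, Matrix.of_apply]
  have h1 : ∀ p : Fin d, ∑ q, (1 : Matrix (Fin d) (Fin d) ℂ) p q *
      (ℰ (Matrix.single b a 1)) q p = (ℰ (Matrix.single b a 1)) p p := by
    intro p
    rw [Finset.sum_eq_single p]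
    · rw [Matrix.one_apply_eq, one_mul]
    · intro q _ hq; rw [Matrix.one_apply_ne (Ne.symm hq), zero_mul]
    · simp
  rw [Finset.sum_congr rfl fun p _ => h1 p]
  have h2 : ∑ p, (ℰ (Matrix.single b a 1)) p p = (ℰ (Matrix.single b a 1)).trace := rfl
  rw [h2, hTP]
  by_cases h : b = a
  · subst h
    rw [Matrix.one_apply_eq]
    simp [Matrix.trace, Matrix.single, Matrix.diag_apply]
  · rw [Matrix.one_apply_ne (Ne.symm h)]
    simp only [Matrix.trace, Matrix.diag_apply, Matrix.single, Matrix.of_apply]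
    rw [Finset.sum_eq_zero]
    intro p _
    rw [if_neg]
    rintro ⟨rfl, rfl⟩; exact h rfl

lemma adj_trace
    (ℰ : Matrix (Fin d) (Fin d) ℂ →ₗ[ℂ] Matrix (Fin d) (Fin d) ℂ)
    (hUnital : ℰ (1 : Matrix (Fin d) (Fin d) ℂ) = 1)
    (Q : Matrix (Fin d) (Fin d) ℂ) : (adjChan ℰ Q).trace = Q.trace := by
  have key : ∀ q p : Fin d, ∑ a, (ℰ (Matrix.single a a 1)) q p
      = (1 : Matrix (Fin d) (Fin d) ℂ) q p := by
    intro q p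
    rw [← hUnital]
    conv_rhs => rw [one_eq_sum]
    rw [map_sum, Matrix.sum_apply]
  simp only [Matrix.trace, Matrix.diag_apply, adjChan, Matrix.of_apply]
  rw [Finset.sum_comm]
  refine Finset.sum_congr rfl fun p _ => ?_
  rw [Finset.sum_comm]
  have h3 : ∀ q, ∑ a, Q p q * (ℰ (Matrix.single a a 1)) q p
      = Q p q * (1 : Matrix (Fin d) (Fin d) ℂ) q p := by
    intro q; rw [← Finset.mul_sum, key q p]
  rw [Finset.sum_congr rfl fun q _ => h3 q]
  rw [Finset.sum_eq_single p]
  · rw [Matrix.one_apply_eq, mul_one]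
  · intro q _ hq; rw [Matrix.one_apply_ne hq, mul_zero]
  · simp

lemma adj_sub
    (ℰ : Matrix (Fin d) (Fin d) ℂ →ₗ[ℂ] Matrix (Fin d) (Fin d) ℂ)
    (hTP : ∀ ρ : Matrix (Fin d) (Fin d) ℂ, (ℰ ρ).trace = ρ.trace)
    (Q : Matrix (Fin d) (Fin d) ℂ) :
    adjChan ℰ (1 - Q) = 1 - adjChan ℰ Q := by
  have h : adjChan ℰ (1 - Q) = adjChan ℰ 1 - adjChan ℰ Q := by
    ext a b
    simp only [adjChan, Matrix.of_apply, Matrix.sub_apply, sub_mul]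
    rw [← Finset.sum_sub_distrib]
    exact Finset.sum_congr rfl fun p _ => Finset.sum_sub_distrib _ _
  rw [h, adj_one ℰ hTP]

end RankAux


open RankAux in
/-- Unital channels are rank non-decreasing: if `ℰ` is completely positive
(positive semidefinite Choi state), trace preserving and unital, then
`rank(ℰ(ρ)) ≥ rank(ρ)` for every density operator `ρ`. -/
theorem unital_channel_rank_nondecreasing {d : ℕ} (hd : 0 < d)
    (ℰ : Matrix (Fin d) (Fin d) ℂ →ₗ[ℂ] Matrix (Fin d) (Fin d) ℂ)
    (hCP : (tensorId ℰ (maxEntProj d)).PosSemidef)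
    (hTP : ∀ ρ : Matrix (Fin d) (Fin d) ℂ, (ℰ ρ).trace = ρ.trace)
    (hUnital : ℰ (1 : Matrix (Fin d) (Fin d) ℂ) = 1)
    (ρ : Matrix (Fin d) (Fin d) ℂ) (hρ : ρ.PosSemidef) (hρtr : ρ.trace = 1) :
    (ℰ ρ).rank ≥ ρ.rank := by
  classical
  set σ := ℰ ρ with hσdef
  have hσ : σ.PosSemidef := E_psd hd ℰ hCP hρ
  have hH : σ.IsHermitian := hσ.isHermitian
  set lam := hH.eigenvalues with hlam
  set U : Matrix (Fin d) (Fin d) ℂ := (hH.eigenvectorUnitary : Matrix (Fin d) (Fin d) ℂ) with hU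
  have h1 : U * star U = 1 := (Matrix.mem_unitaryGroup_iff).mp hH.eigenvectorUnitary.2
  have h2 : star U * U = 1 := (Matrix.mem_unitaryGroup_iff').mp hH.eigenvectorUnitary.2
  set μ : Fin d → ℝ := fun i => if lam i = 0 then 1 else 0 with hμ
  set Q := U * Matrix.diagonal (fun i => (μ i : ℂ)) * star U with hQ
  set k := (Finset.univ.filter fun i => lam i = 0).card with hk
  have hQpsd : Q.PosSemidef := by
    have hdiag : (Matrix.diagonal (fun i => (μ i : ℂ))).PosSemidef := by
      refine Matrix.PosSemidef.diagonal fun i => ?_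
      by_cases h : lam i = 0 <;> simp [hμ, h]
    have := hdiag.mul_mul_conjTranspose_same U
    rwa [← Matrix.star_eq_conjTranspose] at this
  have h1Q : (1 - Q).PosSemidef := by
    have hdd : (1 : Matrix (Fin d) (Fin d) ℂ) - Matrix.diagonal (fun i => (μ i : ℂ))
        = Matrix.diagonal (fun i => ((1 - μ i : ℝ) : ℂ)) := by
      rw [← Matrix.diagonal_one, Matrix.diagonal_sub]
      congr 1; ext i; push_cast; ring
    have heq : (1 : Matrix (Fin d) (Fin d) ℂ) - Q
        = U * Matrix.diagonal (fun i => ((1 - μ i : ℝ) : ℂ)) * star U := by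
      rw [← hdd, Matrix.mul_sub, Matrix.sub_mul, Matrix.mul_one, h1, ← hQ]
    rw [heq]
    have hdiag2 : (Matrix.diagonal (fun i => ((1 - μ i : ℝ) : ℂ))).PosSemidef := by
      refine Matrix.PosSemidef.diagonal fun i => ?_
      by_cases h : lam i = 0 <;> simp [hμ, h]
    have := hdiag2.mul_mul_conjTranspose_same U
    rwa [← Matrix.star_eq_conjTranspose] at this
  have hspec : σ = U * Matrix.diagonal (RCLike.ofReal ∘ lam) * star U := hH.spectral_theorem
  have hQσ : Q * σ = 0 := by
    rw [hspec, hQ]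
    have e1 : U * Matrix.diagonal (fun i => (μ i : ℂ)) * star U *
        (U * Matrix.diagonal (RCLike.ofReal ∘ lam) * star U)
        = U * (Matrix.diagonal (fun i => (μ i : ℂ)) * ((star U * U) *
            Matrix.diagonal (RCLike.ofReal ∘ lam))) * star U := by
      noncomm_ring
    rw [e1, h2, one_mul, Matrix.diagonal_mul_diagonal]
    have e2 : (fun i => (μ i : ℂ) * (RCLike.ofReal ∘ lam) i) = fun _ => (0 : ℂ) := by
      ext i
      by_cases h : lam i = 0 <;> simp [hμ, h, Function.comp]
    rw [e2, Matrix.diagonal_zero, Matrix.mul_zero, Matrix.zero_mul]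
  have hQtr : Q.trace = (k : ℂ) := by
    rw [hQ, Matrix.trace_mul_cycle, h2, one_mul, Matrix.trace_diagonal]
    have hc : ∀ i, ((μ i : ℝ) : ℂ) = if lam i = 0 then (1:ℂ) else 0 := fun i => by
      by_cases h : lam i = 0 <;> simp [hμ, h]
    rw [Finset.sum_congr rfl fun i _ => hc i, Finset.sum_boole, hk]
  have hApsd : (adjChan ℰ Q).PosSemidef := adj_psd hd ℰ hCP hQpsd
  have hA1 : ((1 : Matrix (Fin d) (Fin d) ℂ) - adjChan ℰ Q).PosSemidef := by
    rw [← adj_sub ℰ hTP Q]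
    exact adj_psd hd ℰ hCP h1Q
  have hAtr : (adjChan ℰ Q).trace = (k : ℂ) := by
    rw [adj_trace ℰ hUnital, hQtr]
  have hAρ : adjChan ℰ Q * ρ = 0 := by
    refine psd_mul_eq_zero_of_trace hApsd hρ ?_
    rw [dual_trace, ← hσdef, hQσ, Matrix.trace_zero]
  have hrankbound : (adjChan ℰ Q).rank + ρ.rank ≤ d := by
    simpa using Matrix.rank_add_rank_le_card_of_mul_eq_zero hAρ
  have hAH : (adjChan ℰ Q).IsHermitian := hApsd.isHermitian
  set ν := hAH.eigenvalues with hν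
  have hν0 : ∀ i, 0 ≤ ν i := hApsd.eigenvalues_nonneg
  have hν1 : ∀ i, ν i ≤ 1 := by
    intro i
    have hvec := hAH.mulVec_eigenvectorBasis i
    set v : Fin d → ℂ := ⇑(hAH.eigenvectorBasis i) with hv
    have hvv : star v ⬝ᵥ v = 1 := by
      have hnorm := hAH.eigenvectorBasis.orthonormal.1 i
      have hi : (inner ℂ (hAH.eigenvectorBasis i) (hAH.eigenvectorBasis i) : ℂ) = 1 := by
        rw [inner_self_eq_norm_sq_to_K, hnorm]; norm_num
      rw [EuclideanSpace.inner_eq_star_dotProduct] at hi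
      rw [dotProduct_comm]
      simpa using hi
    have hq := hA1.dotProduct_mulVec_nonneg v
    have hmv : ((1 : Matrix (Fin d) (Fin d) ℂ) - adjChan ℰ Q) *ᵥ v
        = ((1 - ν i : ℝ) : ℂ) • v := by
      rw [Matrix.sub_mulVec, Matrix.one_mulVec, hvec]
      ext j
      simp only [Pi.sub_apply, Pi.smul_apply, Complex.real_smul, smul_eq_mul]
      push_cast
      ring
    rw [hmv] at hq
    rw [dotProduct_smul, smul_eq_mul, hvv, mul_one] at hq
    have := Complex.zero_le_real.mp hq
    linarith
  have htr2 : (adjChan ℰ Q).trace = ∑ i, (ν i : ℂ) := by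
    conv_lhs => rw [hAH.spectral_theorem, Unitary.conjStarAlgAut_apply]
    have h2A : star (hAH.eigenvectorUnitary : Matrix (Fin d) (Fin d) ℂ) *
        (hAH.eigenvectorUnitary : Matrix (Fin d) (Fin d) ℂ) = 1 :=
      (Matrix.mem_unitaryGroup_iff').mp hAH.eigenvectorUnitary.2
    rw [Matrix.trace_mul_cycle, h2A, one_mul, Matrix.trace_diagonal]
    rfl
  have hkR : (k : ℝ) = ∑ i, ν i := by
    have h := hAtr.symm.trans htr2
    exact_mod_cast h
  have hkle : (k : ℝ) ≤ ((Finset.univ.filter fun i => ν i ≠ 0).card : ℝ) := by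
    rw [hkR]
    calc ∑ i, ν i = ∑ i ∈ Finset.univ.filter (fun i => ν i ≠ 0), ν i :=
          (Finset.sum_filter_ne_zero _).symm
    _ ≤ ∑ _i ∈ Finset.univ.filter (fun i => ν i ≠ 0), (1 : ℝ) :=
          Finset.sum_le_sum fun i _ => hν1 i
    _ = _ := by simp
  have hrankA : k ≤ (adjChan ℰ Q).rank := by
    rw [hAH.rank_eq_card_non_zero_eigs, Fintype.card_subtype]
    exact_mod_cast hkle
  have hsum : σ.rank + k = d := by
    rw [hH.rank_eq_card_non_zero_eigs, Fintype.card_subtype, hk]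
    have hfc : (Finset.univ.filter fun x => hH.eigenvalues x ≠ 0)
        = Finset.univ.filter fun x => ¬ lam x = 0 := by
      apply Finset.filter_congr; intro x _; simp [hlam]
    rw [hfc]
    have hcard := Finset.card_filter_add_card_filter_not
      (s := (Finset.univ : Finset (Fin d))) (p := fun i => lam i = 0)
    simp only [Finset.card_univ, Fintype.card_fin] at hcard
    omega
  omega
end
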